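/- With notation as in the basic inequalities lemma, since σ is a permutation the recursion μ_k = μ_{k-1} + e_{σ(k)} - e_k implies that μ_k(i) ≤ μ_{2n-k}(i) ≤ μ_k(i) + 1 for i ∈ {1,...,k} ∪ {k*,...,2n}, and μ_k(i) ≥ μ_{2n-k}(i) ≥ μ_k(i) − 1 for i ∈ {k+1,...,2n-k}, for all 0 ≤ k ≤ n. -/
import Mathlib


/-- `rev n i = i*` where `i* = 2n+1-i` (0-based). -/
def rev (n : ℕ) (i : Fin (2 * n)) : Fin (2 * n) :=
  ⟨2 * n - 1 - i.val, by have := i.isLt; omega⟩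

/-- standard basis vector of ℤ^{2n}. -/
def eZ (n : ℕ) (j : Fin (2 * n)) : Fin (2 * n) → ℤ := fun i => if i = j then 1 else 0

/-- for a permutation σ ∈ S_{2n} and μ_0,...,μ_{2n} satisfying the
recursion μ_k = μ_{k-1} + e_{σ(k)} - e_k, one has for all 0 ≤ k ≤ n:
μ_k(i) ≤ μ_{2n-k}(i) ≤ μ_k(i) + 1 for i ∈ {1,...,k} ∪ {k*,...,2n}, and
μ_k(i) ≥ μ_{2n-k}(i) ≥ μ_k(i) - 1 for i ∈ {k+1,...,2n-k}. -/
theorem stmt5 (n : ℕ) (hn : 2 ≤ n)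
    (σ : Equiv.Perm (Fin (2 * n)))
    (μ : ℕ → Fin (2 * n) → ℤ)
    (hrec : ∀ k : Fin (2 * n),
      μ (k.val + 1) = fun i => μ k.val i + eZ n (σ k) i - eZ n k i) :
    ∀ k ≤ n, ∀ i : Fin (2 * n),
      ((i.val < k ∨ 2 * n - k ≤ i.val) →
        μ k i ≤ μ (2 * n - k) i ∧ μ (2 * n - k) i ≤ μ k i + 1) ∧
      ((k ≤ i.val ∧ i.val < 2 * n - k) →
        μ (2 * n - k) i ≤ μ k i ∧ μ k i - 1 ≤ μ (2 * n - k) i) := by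
  intro k hk i
  have key : ∀ d, k + d ≤ 2 * n →
      μ (k + d) i = μ k i + ∑ m ∈ Finset.univ.filter
        (fun m : Fin (2 * n) => k ≤ m.val ∧ m.val < k + d),
        ((if i = σ m then (1:ℤ) else 0) - (if i = m then 1 else 0)) := by
    intro d
    induction d with
    | zero =>
      intro _
      have h0 : Finset.univ.filter (fun m : Fin (2*n) => k ≤ m.val ∧ m.val < k) = ∅ := by
        apply Finset.filter_false_of_mem; intro m _; omega
      simp only [Nat.add_zero]
      rw [h0]
      simp
    | succ d ih =>
      intro hd
      have hlt : k + d < 2 * n := by omega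
      have hrec' := congrFun (hrec ⟨k + d, hlt⟩) i
      have hset : Finset.univ.filter (fun m : Fin (2*n) => k ≤ m.val ∧ m.val < k + (d+1))
          = insert ⟨k+d, hlt⟩
            (Finset.univ.filter (fun m : Fin (2*n) => k ≤ m.val ∧ m.val < k + d)) := by
        ext m
        simp only [Finset.mem_insert, Finset.mem_filter, Finset.mem_univ, true_and, Fin.ext_iff]
        omega
      have hnotmem : (⟨k+d, hlt⟩ : Fin (2*n)) ∉
          Finset.univ.filter (fun m : Fin (2*n) => k ≤ m.val ∧ m.val < k + d) := by
        simp
      rw [hset, Finset.sum_insert hnotmem]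
      have hkd : k + (d + 1) = (k + d) + 1 := by ring
      rw [hkd, hrec', ih (by omega)]
      simp only [eZ]
      ring
  have hdeq : k + (2 * n - 2 * k) = 2 * n - k := by omega
  have hsum := key (2 * n - 2 * k) (by omega)
  rw [hdeq] at hsum
  set T := Finset.univ.filter (fun m : Fin (2*n) => k ≤ m.val ∧ m.val < 2 * n - k) with hT
  rw [Finset.sum_sub_distrib] at hsum
  have h1 : (∑ m ∈ T, (if i = σ m then (1:ℤ) else 0))
      = if σ.symm i ∈ T then 1 else 0 := by
    rw [← Finset.sum_ite_eq T (σ.symm i) (fun _ => (1:ℤ))]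
    apply Finset.sum_congr rfl
    intro m _
    congr 1
    simp [Equiv.symm_apply_eq]
  have h2 : (∑ m ∈ T, (if i = m then (1:ℤ) else 0)) = if i ∈ T then 1 else 0 :=
    Finset.sum_ite_eq T i (fun _ => (1:ℤ))
  rw [h1, h2] at hsum
  have hiT : i ∈ T ↔ k ≤ i.val ∧ i.val < 2 * n - k := by
    simp [hT]
  constructor
  · intro hcase
    have : i ∉ T := by rw [hiT]; omega
    rw [if_neg this] at hsum
    by_cases hs : σ.symm i ∈ T <;> simp [hs] at hsum <;> omega
  · intro hcase
    have : i ∈ T := by rw [hiT]; exact hcase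
    rw [if_pos this] at hsum
    by_cases hs : σ.symm i ∈ T <;> simp [hs] at hsum <;> omega
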